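/- A homeomorphism f of a compact metric space M is countably-expansive if and only if it is measure-expansive. -/

import Mathlib

open Metric MeasureTheory Set Topology Filter
open scoped ENNReal

variable {M : Type*}

/-- The dynamical ball of an iterated homeomorphism. -/
def Gamma [MetricSpace M] (f : M ≃ₜ M) (δ : ℝ) (x : M) : Set M :=
  {y | ∀ n : ℤ, dist ((f.toEquiv ^ n) x) ((f.toEquiv ^ n) y) ≤ δ}

lemma cantor_nebot : (𝓝[≠] (0 : ℕ → Bool)).NeBot := by
  rw [← mem_closure_iff_nhdsWithin_neBot]
  have : Filter.Tendsto (fun k : ℕ => Function.update (0 : ℕ → Bool) k true) atTop (𝓝 0) := by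
    rw [tendsto_pi_nhds]
    intro n
    apply tendsto_nhds_of_eventually_eq
    filter_upwards [eventually_gt_atTop n] with k hk
    simp [Function.update_of_ne (by omega : n ≠ k)]
  refine mem_closure_of_tendsto this ?_
  filter_upwards with k
  simp only [mem_compl_iff, mem_singleton_iff]
  intro h
  have := congrFun h k
  simp at this

lemma cont_pow [MetricSpace M] (e : Equiv.Perm M) (he : Continuous e) (m : ℕ) :
    Continuous fun y => (e ^ m) y := by
  induction m with
  | zero => simp only [pow_zero, Equiv.Perm.coe_one]; exact continuous_id
  | succ k ih =>
    have : (fun y => (e ^ (k+1)) y) = fun y => (e ^ k) (e y) := by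
      funext y; rw [pow_succ]; rfl
    rw [this]; exact ih.comp he

lemma cont_zpow [MetricSpace M] (f : M ≃ₜ M) (n : ℤ) :
    Continuous fun y => (f.toEquiv ^ n) y := by
  cases n with
  | ofNat m => rw [Int.ofNat_eq_coe, zpow_natCast]; exact cont_pow _ f.continuous m
  | negSucc m =>
    rw [zpow_negSucc, ← inv_pow]
    have : f.toEquiv⁻¹ = f.symm.toEquiv := rfl
    rw [this]
    exact cont_pow _ f.symm.continuous (m+1)

lemma gamma_closed [MetricSpace M] (f : M ≃ₜ M) (δ : ℝ) (x : M) :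
    IsClosed (Gamma f δ x) := by
  have : Gamma f δ x = ⋂ n : ℤ, {y | dist ((f.toEquiv ^ n) x) ((f.toEquiv ^ n) y) ≤ δ} := by
    ext y; simp [Gamma, mem_iInter]
  rw [this]
  exact isClosed_iInter fun n => isClosed_le (continuous_const.dist (cont_zpow f n)) continuous_const

theorem stmt0 [MetricSpace M] [CompactSpace M] [MeasurableSpace M] [BorelSpace M]
    (f : M ≃ₜ M) :
    (∃ δ > (0:ℝ), ∀ x : M, (Gamma f δ x).Countable) ↔
    (∀ μ : Measure M, IsProbabilityMeasure μ → (∀ x : M, μ {x} = 0) →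
      ∃ δ > (0:ℝ), ∀ x : M, μ (Gamma f δ x) = 0) := by
  constructor
  · rintro ⟨δ, hδ, hc⟩ μ _ hμ
    haveI : NullSingletonClass μ := ⟨hμ⟩
    exact ⟨δ, hδ, fun x => (hc x).measure_zero μ⟩
  · intro H
    by_contra hnc
    push_neg at hnc
    have hx : ∀ n : ℕ, ∃ x, ¬ (Gamma f (1/(n+1)) x).Countable := by
      intro n
      obtain ⟨x, hx⟩ := hnc (1/(n+1)) (by positivity)
      exact ⟨x, hx⟩
    choose x hx using hx
    -- injections from the Cantor space
    have hinj : ∀ n : ℕ, ∃ g : (ℕ → Bool) → M,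
        range g ⊆ Gamma f (1/(n+1)) (x n) ∧ Continuous g ∧ Function.Injective g := by
      intro n
      exact (gamma_closed f _ _).exists_nat_bool_injection_of_not_countable (hx n)
    choose g hgr hgc hgi using hinj
    -- the Haar measure on the Cantor group
    set ν : Measure (ℕ → Bool) := Measure.addHaarMeasure ⊤ with hν
    haveI : (𝓝[≠] (0 : ℕ → Bool)).NeBot := cantor_nebot
    haveI hνprob : IsProbabilityMeasure ν := by
      constructor
      rw [← TopologicalSpace.PositiveCompacts.coe_top (α := ℕ → Bool)]
      exact Measure.addHaarMeasure_self
    haveI hνna : NullSingletonClass ν := inferInstance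
    set μn : ℕ → Measure M := fun n => ν.map (g n) with hμn
    haveI : ∀ n, IsProbabilityMeasure (μn n) :=
      fun n => Measure.isProbabilityMeasure_map (hgc n).measurable.aemeasurable
    set μ : Measure M := Measure.sum (fun n => ((2:ℝ≥0∞)⁻¹)^(n+1) • μn n) with hμ
    have hsumc : ∑' n : ℕ, ((2:ℝ≥0∞)⁻¹)^(n+1) = 1 := by
      have : ∀ n : ℕ, ((2:ℝ≥0∞)⁻¹)^(n+1) = 2⁻¹ * (2⁻¹)^n := fun n => pow_succ' _ _
      rw [tsum_congr this, ENNReal.tsum_mul_left, ENNReal.tsum_geometric]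
      rw [ENNReal.one_sub_inv_two, inv_inv]
      exact ENNReal.inv_mul_cancel two_ne_zero ENNReal.ofNat_ne_top
    haveI hμprob : IsProbabilityMeasure μ := by
      constructor
      rw [hμ, Measure.sum_apply _ MeasurableSet.univ]
      simp only [Measure.smul_apply, measure_univ, smul_eq_mul, mul_one]
      exact hsumc
    have hμna : ∀ y : M, μ {y} = 0 := by
      intro y
      rw [hμ, Measure.sum_apply _ (measurableSet_singleton y)]
      have : ∀ n : ℕ, (((2:ℝ≥0∞)⁻¹)^(n+1) • μn n) {y} = 0 := by
        intro n
        rw [Measure.smul_apply, hμn]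
        rw [Measure.map_apply (hgc n).measurable (measurableSet_singleton y)]
        have hsub : (g n ⁻¹' {y}).Subsingleton := fun a ha b hb => hgi n (ha.trans hb.symm)
        rw [hsub.measure_zero ν, smul_zero]
      simp [this]
    obtain ⟨δ, hδ, h0⟩ := H μ hμprob hμna
    obtain ⟨n, hn⟩ := exists_nat_one_div_lt hδ
    have hsub : Gamma f (1/(n+1)) (x n) ⊆ Gamma f δ (x n) :=
      fun y hy m => (hy m).trans (by exact_mod_cast hn.le)
    have hmeas : MeasurableSet (Gamma f δ (x n)) := (gamma_closed f δ (x n)).measurableSet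
    have h1 : μn n (Gamma f δ (x n)) = 1 := by
      rw [hμn, Measure.map_apply (hgc n).measurable hmeas]
      have : g n ⁻¹' (Gamma f δ (x n)) = univ :=
        eq_univ_of_forall fun b => hsub (hgr n ⟨b, rfl⟩)
      rw [this, measure_univ]
    have hge : ((2:ℝ≥0∞)⁻¹)^(n+1) ≤ μ (Gamma f δ (x n)) := by
      rw [hμ, Measure.sum_apply _ hmeas]
      calc ((2:ℝ≥0∞)⁻¹)^(n+1) = (((2:ℝ≥0∞)⁻¹)^(n+1) • μn n) (Gamma f δ (x n)) := by
            rw [Measure.smul_apply, h1, smul_eq_mul, mul_one]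
        _ ≤ _ := ENNReal.le_tsum n
    rw [h0 (x n)] at hge
    exact absurd hge (by simp)
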